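/- arXiv:1812.02223 — 5 statements merged into one kernel-verified Lean document; each statement's English description precedes it below -/
import Mathlib

section
/- Let A and B be matrices over a field K of sizes p × q and r × s respectively. Then the rank of the Kronecker product A ⊗ B equals rank(A) · rank(B). -/
open Kronecker TensorProduct LinearMap Module

lemma finrank_range_tensorMap {K V W V' W' : Type*} [Field K]
    [AddCommGroup V] [Module K V] [AddCommGroup W] [Module K W]
    [AddCommGroup V'] [Module K V'] [AddCommGroup W'] [Module K W']
    (f : V →ₗ[K] W) (g : V' →ₗ[K] W') :
    finrank K (LinearMap.range (TensorProduct.map f g)) =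
      finrank K (LinearMap.range f) * finrank K (LinearMap.range g) := by
  have hfact : TensorProduct.map f g =
      (TensorProduct.map (LinearMap.range f).subtype (LinearMap.range g).subtype).comp
        (TensorProduct.map f.rangeRestrict g.rangeRestrict) := by
    rw [← TensorProduct.map_comp]; rfl
  have hsurj : Function.Surjective (TensorProduct.map f.rangeRestrict g.rangeRestrict) :=
    TensorProduct.map_surjective f.surjective_rangeRestrict g.surjective_rangeRestrict
  have hinj : Function.Injective
      (TensorProduct.map (LinearMap.range f).subtype (LinearMap.range g).subtype) := by
    rw [← LinearMap.rTensor_comp_lTensor]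
    exact (Module.Flat.rTensor_preserves_injective_linearMap _
        (LinearMap.range f).injective_subtype).comp
      (Module.Flat.lTensor_preserves_injective_linearMap _
        (LinearMap.range g).injective_subtype)
  rw [hfact, LinearMap.range_comp, LinearMap.range_eq_top.2 hsurj, Submodule.map_top]
  rw [LinearMap.finrank_range_of_inj hinj, Module.finrank_tensorProduct]

theorem stmt_3 (K : Type*) [Field K] (p q r s : ℕ)
    (A : Matrix (Fin p) (Fin q) K) (B : Matrix (Fin r) (Fin s) K) :
    (A ⊗ₖ B).rank = A.rank * B.rank := by
  rw [Matrix.rank_eq_finrank_range_toLin (A ⊗ₖ B)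
      ((Pi.basisFun K (Fin p)).tensorProduct (Pi.basisFun K (Fin r)))
      ((Pi.basisFun K (Fin q)).tensorProduct (Pi.basisFun K (Fin s))),
    Matrix.toLin_kronecker, finrank_range_tensorMap,
    ← Matrix.rank_eq_finrank_range_toLin A (Pi.basisFun K (Fin p)) (Pi.basisFun K (Fin q)),
    ← Matrix.rank_eq_finrank_range_toLin B (Pi.basisFun K (Fin r)) (Pi.basisFun K (Fin s))]
end

section
/- Let K be a field and s ≥ 2. Let L(t_0, t_1) be the s × s linear matrix with t_1 in position (1,1), −t_1 in positions (i,i) for 2 ≤ i ≤ s, t_0 in positions (i, i+1) for 1 ≤ i ≤ s−1, and −t_1 in position (s,1), all other entries zero. Then for every d ≥ 1 and every d × d matrix A over K, the rank of the sd × sd matrix L(I_d, A) equals (s−1)d + rank(A^s − A). -/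
/-- The `sd × sd` matrix `L(t₀, t₁)` with `t₀ := B₀` and `t₁ := B₁` (`d × d` blocks):
diagonal blocks `B₁, -B₁, …, -B₁`, superdiagonal blocks `B₀`, block `-B₁` in position `(s,1)`. -/
def Lsub {K : Type*} [Field K] (s d : ℕ) (B₀ B₁ : Matrix (Fin d) (Fin d) K) :
    Matrix (Fin s × Fin d) (Fin s × Fin d) K :=
  Matrix.of fun p q =>
    (if p.1 = q.1 then (if (p.1 : ℕ) = 0 then B₁ p.2 q.2 else -B₁ p.2 q.2) else 0)
    + (if (q.1 : ℕ) = (p.1 : ℕ) + 1 then B₀ p.2 q.2 else 0)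
    + (if (p.1 : ℕ) = s - 1 ∧ (q.1 : ℕ) = 0 ∧ p.1 ≠ q.1 then -B₁ p.2 q.2 else 0)

lemma mulVec_Lsub {K : Type*} [Field K] {s d : ℕ} (hs : 2 ≤ s) (A : Matrix (Fin d) (Fin d) K)
    (x : Fin s × Fin d → K) (i : Fin s) (a : Fin d) :
    (Lsub s d 1 A).mulVec x (i, a) =
      (if (i : ℕ) = 0 then A.mulVec (fun b => x (i, b)) a
        else -(A.mulVec (fun b => x (i, b)) a))
      + (if h : (i : ℕ) + 1 < s then x (⟨(i : ℕ) + 1, h⟩, a) else 0)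
      + (if (i : ℕ) = s - 1 then -(A.mulVec (fun b => x (⟨0, by omega⟩, b)) a) else 0) := by
  have T1 : (∑ j : Fin s, ∑ b : Fin d,
      (if i = j then if (i : ℕ) = 0 then A a b else -A a b else 0) * x (j, b))
      = (if (i : ℕ) = 0 then ∑ b : Fin d, A a b * x (i, b)
          else -∑ b : Fin d, A a b * x (i, b)) := by
    have hpt : ∀ j ∈ Finset.univ, (∑ b : Fin d,
        (if i = j then if (i : ℕ) = 0 then A a b else -A a b else 0) * x (j, b))
        = (if i = j then
            (if (i : ℕ) = 0 then ∑ b : Fin d, A a b * x (j, b)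
              else -∑ b : Fin d, A a b * x (j, b)) else 0) := by
      intro j _
      split_ifs <;> simp_all [neg_mul]
    rw [Finset.sum_congr rfl hpt, Finset.sum_ite_eq]
    simp
  have T2 : (∑ j : Fin s, ∑ b : Fin d,
      (if (j : ℕ) = (i : ℕ) + 1 then (1 : Matrix (Fin d) (Fin d) K) (i, a).2 (j, b).2 else 0)
        * x (j, b))
      = (if h : (i : ℕ) + 1 < s then x (⟨(i : ℕ) + 1, h⟩, a) else 0) := by
    have hpt : ∀ j : Fin s, j ∈ Finset.univ → (∑ b : Fin d,
        (if (j : ℕ) = (i : ℕ) + 1 then (1 : Matrix (Fin d) (Fin d) K) (i, a).2 (j, b).2 else 0)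
          * x (j, b))
        = (if (j : ℕ) = (i : ℕ) + 1 then x (j, a) else 0) := by
      intro j _
      split_ifs with h
      · simp [Matrix.one_apply, ite_mul]
      · simp
    rw [Finset.sum_congr rfl hpt]
    by_cases h : (i : ℕ) + 1 < s
    · have hpt2 : ∀ j : Fin s, j ∈ Finset.univ → (if (j : ℕ) = (i : ℕ) + 1 then x (j, a) else 0)
          = (if j = (⟨(i : ℕ) + 1, h⟩ : Fin s) then x (j, a) else 0) := by
        intro j _
        simp [Fin.ext_iff]
      rw [Finset.sum_congr rfl hpt2, Finset.sum_ite_eq']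
      simp [h]
    · rw [Finset.sum_eq_zero (fun j _ => by rw [if_neg]; omega), dif_neg h]
  have T3 : (∑ j : Fin s, ∑ b : Fin d,
      (if (i : ℕ) = s - 1 ∧ (j : ℕ) = 0 ∧ i ≠ j then -A a b else 0) * x (j, b))
      = (if (i : ℕ) = s - 1 then -∑ b : Fin d, A a b * x ((⟨0, by omega⟩ : Fin s), b) else 0) := by
    by_cases h : (i : ℕ) = s - 1
    · have hne : i ≠ (⟨0, by omega⟩ : Fin s) := by
        intro hij
        rw [hij] at h
        simp at h
        omega
      have hpt : ∀ j : Fin s, j ∈ Finset.univ → (∑ b : Fin d,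
          (if (i : ℕ) = s - 1 ∧ (j : ℕ) = 0 ∧ i ≠ j then -A a b else 0) * x (j, b))
          = (if j = (⟨0, by omega⟩ : Fin s) then -∑ b : Fin d, A a b * x (j, b) else 0) := by
        intro j _
        by_cases hj : j = (⟨0, by omega⟩ : Fin s)
        · subst hj
          simp [h, hne, ite_mul, neg_mul, Finset.sum_neg_distrib]
        · rw [if_neg hj, Finset.sum_eq_zero]
          intro b _
          rw [if_neg, zero_mul]
          rintro ⟨-, hj0, -⟩
          exact hj (by simp [Fin.ext_iff, hj0])
      rw [Finset.sum_congr rfl hpt, Finset.sum_ite_eq']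
      simp [h]
    · rw [if_neg h, Finset.sum_eq_zero]
      intro j _
      rw [Finset.sum_eq_zero]
      intro b _
      rw [if_neg (by tauto), zero_mul]
  simp only [Matrix.mulVec, dotProduct, Lsub, Matrix.of_apply, Fintype.sum_prod_type,
    add_mul, Finset.sum_add_distrib]
  rw [T1, T2, T3]

section Aux

variable {K : Type*} [Field K] {s d : ℕ}

/-- Expansion of a vector `v` to the kernel of `L`. -/
def expandV (s : ℕ) (A : Matrix (Fin d) (Fin d) K) (v : Fin d → K) : Fin s × Fin d → K :=
  fun p => if (p.1 : ℕ) = 0 then v p.2 else -((A ^ (p.1 : ℕ)).mulVec v p.2)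

lemma expandV_mem (hs : 2 ≤ s) (A : Matrix (Fin d) (Fin d) K) (v : Fin d → K)
    (hv : (A ^ s - A).mulVec v = 0) :
    (Lsub s d 1 A).mulVec (expandV s A v) = 0 := by
  have hv' : (A ^ s).mulVec v = A.mulVec v := by
    rw [Matrix.sub_mulVec] at hv
    exact sub_eq_zero.mp hv
  funext p
  obtain ⟨i, a⟩ := p
  show _ = (0 : K)
  rw [mulVec_Lsub hs]
  have hcomp0 : (fun b => expandV s A v ((⟨0, by omega⟩ : Fin s), b)) = v :=
    funext fun b => if_pos rfl
  rw [hcomp0]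
  by_cases hi0 : (i : ℕ) = 0
  · have hcomp : (fun b => expandV s A v (i, b)) = v := funext fun b => if_pos hi0
    rw [if_pos hi0, dif_pos (show (i : ℕ) + 1 < s by omega),
      if_neg (show ¬(i : ℕ) = s - 1 by omega), hcomp]
    have h2 : expandV s A v (⟨(i : ℕ) + 1, by omega⟩, a)
        = -((A ^ ((i : ℕ) + 1)).mulVec v a) := by simp [expandV]
    rw [h2, hi0, pow_one]
    ring
  · have hcomp : (fun b => expandV s A v (i, b))
        = -((A ^ (i : ℕ)).mulVec v) := funext fun b => if_neg hi0
    rw [if_neg hi0, hcomp, Matrix.mulVec_neg, Matrix.mulVec_mulVec, ← pow_succ']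
    by_cases h2 : (i : ℕ) + 1 < s
    · rw [dif_pos h2, if_neg (show ¬(i : ℕ) = s - 1 by omega)]
      have h3 : expandV s A v (⟨(i : ℕ) + 1, h2⟩, a)
          = -((A ^ ((i : ℕ) + 1)).mulVec v a) := by simp [expandV]
      rw [h3]
      simp
    · have his : (i : ℕ) = s - 1 := by have := i.isLt; omega
      rw [dif_neg h2, if_pos his]
      have h4 : (i : ℕ) + 1 = s := by have := i.isLt; omega
      rw [h4, hv']
      simp

lemma ker_comp (hs : 2 ≤ s) (A : Matrix (Fin d) (Fin d) K) (x : Fin s × Fin d → K)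
    (hx : (Lsub s d 1 A).mulVec x = 0) :
    ∀ k, 1 ≤ k → ∀ (hk : k < s) (a : Fin d),
      x (⟨k, hk⟩, a) = -((A ^ k).mulVec (fun b => x (⟨0, by omega⟩, b)) a) := by
  have row : ∀ (k : ℕ) (hk : k < s) (a : Fin d),
      (if k = 0 then A.mulVec (fun b => x (⟨k, hk⟩, b)) a
        else -(A.mulVec (fun b => x (⟨k, hk⟩, b)) a))
      + (if h : k + 1 < s then x (⟨k + 1, h⟩, a) else 0)
      + (if k = s - 1 then -(A.mulVec (fun b => x (⟨0, by omega⟩, b)) a) else 0) = 0 :=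
    fun k hk a => by
      have h0 := congrFun hx (⟨k, hk⟩, a)
      rw [mulVec_Lsub hs] at h0
      exact h0
  intro k hk1
  induction k, hk1 using Nat.le_induction with
  | base =>
    intro hk a
    have h := row 0 (by omega) a
    rw [if_pos rfl, dif_pos (show 0 + 1 < s from hk),
      if_neg (show ¬(0 : ℕ) = s - 1 by omega), add_zero] at h
    rw [pow_one]
    exact eq_neg_of_add_eq_zero_right h
  | succ n hn ih =>
    intro hk a
    have hns : n < s := by omega
    have h := row n hns a
    rw [if_neg (by omega), dif_pos (show n + 1 < s from hk),
      if_neg (show ¬n = s - 1 by omega), add_zero] at h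
    have hxn : (fun b => x (⟨n, hns⟩, b))
        = -((A ^ n).mulVec (fun c => x (⟨0, by omega⟩, c))) := by
      funext b
      exact ih hns b
    rw [hxn, Matrix.mulVec_neg, Matrix.mulVec_mulVec, ← pow_succ', Pi.neg_apply, neg_neg] at h
    exact eq_neg_of_add_eq_zero_right h

end Aux

theorem stmt_6 (K : Type*) [Field K] (s : ℕ) (hs : 2 ≤ s) (d : ℕ) (hd : 1 ≤ d)
    (A : Matrix (Fin d) (Fin d) K) :
    (Lsub s d (1 : Matrix (Fin d) (Fin d) K) A).rank = (s - 1) * d + (A ^ s - A).rank := by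
  have h0s : 0 < s := by omega
  have kerL_proj : ∀ x : Fin s × Fin d → K, (Lsub s d 1 A).mulVec x = 0 →
      (A ^ s - A).mulVec (fun b => x (⟨0, h0s⟩, b)) = 0 := by
    intro x hx
    funext a
    show _ = (0 : K)
    have h0 := congrFun hx ((⟨s - 1, by omega⟩ : Fin s), a)
    rw [mulVec_Lsub hs] at h0
    simp only [Fin.val_mk, Pi.zero_apply] at h0
    rw [if_neg (by omega), dif_neg (by omega)] at h0
    simp only [if_true] at h0
    rw [add_zero] at h0
    have hxs : (fun b => x ((⟨s - 1, by omega⟩ : Fin s), b))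
        = -((A ^ (s - 1)).mulVec (fun c => x (⟨0, h0s⟩, c))) := by
      funext b
      exact ker_comp hs A x hx (s - 1) (by omega) (by omega) b
    rw [hxs, Matrix.mulVec_neg, Matrix.mulVec_mulVec, ← pow_succ',
      show s - 1 + 1 = s by omega, Pi.neg_apply, neg_neg] at h0
    rw [Matrix.sub_mulVec, Pi.sub_apply, sub_eq_add_neg]
    exact h0
  have kerL_exp : ∀ x : Fin s × Fin d → K, (Lsub s d 1 A).mulVec x = 0 →
      expandV s A (fun b => x (⟨0, h0s⟩, b)) = x := by
    intro x hx
    funext p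
    obtain ⟨i, a⟩ := p
    by_cases hi0 : (i : ℕ) = 0
    · have hieq : i = (⟨0, h0s⟩ : Fin s) := Fin.ext hi0
      rw [hieq]
      exact if_pos rfl
    · have hc := ker_comp hs A x hx (i : ℕ) (by omega) i.isLt a
      show (if (i : ℕ) = 0 then _ else _) = _
      rw [if_neg hi0]
      exact hc.symm
  let e : LinearMap.ker (Lsub s d (1 : Matrix (Fin d) (Fin d) K) A).mulVecLin ≃ₗ[K]
      LinearMap.ker (A ^ s - A).mulVecLin :=
    { toFun := fun x => ⟨fun b => x.1 (⟨0, h0s⟩, b), by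
        rw [LinearMap.mem_ker, Matrix.mulVecLin_apply]
        refine kerL_proj x.1 ?_
        have h := x.2
        rwa [LinearMap.mem_ker, Matrix.mulVecLin_apply] at h⟩
      map_add' := fun x y => rfl
      map_smul' := fun c x => rfl
      invFun := fun v => ⟨expandV s A v.1, by
        rw [LinearMap.mem_ker, Matrix.mulVecLin_apply]
        refine expandV_mem hs A v.1 ?_
        have h := v.2
        rwa [LinearMap.mem_ker, Matrix.mulVecLin_apply] at h⟩
      left_inv := fun x => Subtype.ext (kerL_exp x.1 (by
        have h := x.2
        rwa [LinearMap.mem_ker, Matrix.mulVecLin_apply] at h))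
      right_inv := fun v => Subtype.ext (by
        funext b
        show expandV s A v.1 (⟨0, h0s⟩, b) = v.1 b
        exact if_pos rfl) }
  have h1 : (Lsub s d (1 : Matrix (Fin d) (Fin d) K) A).rank
      + Module.finrank K (LinearMap.ker (Lsub s d (1 : Matrix (Fin d) (Fin d) K) A).mulVecLin)
      = s * d := by
    have h := LinearMap.finrank_range_add_finrank_ker
      (Lsub s d (1 : Matrix (Fin d) (Fin d) K) A).mulVecLin
    rw [Module.finrank_fintype_fun_eq_card, Fintype.card_prod, Fintype.card_fin,
      Fintype.card_fin] at h
    exact h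
  have h2 : (A ^ s - A).rank + Module.finrank K (LinearMap.ker (A ^ s - A).mulVecLin) = d := by
    have h := LinearMap.finrank_range_add_finrank_ker (A ^ s - A).mulVecLin
    rw [Module.finrank_fintype_fun_eq_card, Fintype.card_fin] at h
    exact h
  have h3 := e.finrank_eq
  rw [h3] at h1
  have e1 : (s - 1) * d + d = s * d := by
    have hss : s - 1 + 1 = s := by omega
    calc (s - 1) * d + d = (s - 1 + 1) * d := by ring
      _ = s * d := by rw [hss]
  have h4 : (Lsub s d (1 : Matrix (Fin d) (Fin d) K) A).rank
      + Module.finrank K (LinearMap.ker (A ^ s - A).mulVecLin)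
      = (s - 1) * d + ((A ^ s - A).rank
        + Module.finrank K (LinearMap.ker (A ^ s - A).mulVecLin)) := by
    rw [h2, e1]
    exact h1
  exact Nat.add_right_cancel (h4.trans (add_assoc _ _ _).symm)
end

section
/- Let K = F_q be a finite field, d ≥ 2, s = q^d, and n ≥ s + 1; set r = n − s. With D(t_0, t_1) the n × n linear matrix of the previous context, there exist d × d matrices A_0, A_1 over K such that rank(D(A_0, A_1)) > (n−1)d. -/
set_option maxHeartbeats 1600000
set_option linter.unreachableTactic false
set_option linter.unusedTactic false



/-- The `nd × nd` matrix `D(t₀, t₁)` (with `d × d` blocks) obtained from the `n × n` linear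
matrix `D = diag(L, t₀ I_{n-s})` — where `L` is the `s × s` Higman linearization of `T^s - T`
(diagonal `t₁, -t₁, …, -t₁`, superdiagonal `t₀`, entry `-t₁` in position `(s,1)`) — by
substituting `t₀ := A₀` and `t₁ := A₁`. -/
def Dsub {K : Type*} [Field K] (s n d : ℕ) (A₀ A₁ : Matrix (Fin d) (Fin d) K) :
    Matrix (Fin n × Fin d) (Fin n × Fin d) K :=
  Matrix.of fun p q =>
    if (p.1 : ℕ) < s ∧ (q.1 : ℕ) < s then
      (if p.1 = q.1 then (if (p.1 : ℕ) = 0 then A₁ p.2 q.2 else -A₁ p.2 q.2) else 0)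
      + (if (q.1 : ℕ) = (p.1 : ℕ) + 1 then A₀ p.2 q.2 else 0)
      + (if (p.1 : ℕ) = s - 1 ∧ (q.1 : ℕ) = 0 ∧ p.1 ≠ q.1 then -A₁ p.2 q.2 else 0)
    else if p.1 = q.1 then A₀ p.2 q.2 else 0

/-- the single-entry matrix `E_{1,d}` -/
def Ehelp (K : Type*) [Field K] (d : ℕ) : Matrix (Fin d) (Fin d) K :=
  Matrix.of fun p q => if (p : ℕ) = 0 ∧ (q : ℕ) = d - 1 then 1 else 0

theorem Dsub_entry {K : Type*} [Field K] (s n d : ℕ) (i j : Fin n) (p q : Fin d) :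
    Dsub s n d 1 (Ehelp K d) (i, p) (j, q) =
      if (i : ℕ) < s ∧ (j : ℕ) < s then
        (if (i : ℕ) = (j : ℕ) then
            (if (i : ℕ) = 0 then (if (p:ℕ) = 0 ∧ (q:ℕ) = d-1 then 1 else 0)
             else -(if (p:ℕ) = 0 ∧ (q:ℕ) = d-1 then (1:K) else 0))
          else 0)
        + (if (j : ℕ) = (i : ℕ) + 1 then (if (p:ℕ) = (q:ℕ) then 1 else 0) else 0)
        + (if (i : ℕ) = s - 1 ∧ (j : ℕ) = 0 ∧ (i:ℕ) ≠ (j:ℕ) then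
            -(if (p:ℕ) = 0 ∧ (q:ℕ) = d-1 then (1:K) else 0) else 0)
      else if (i : ℕ) = (j : ℕ) then (if (p:ℕ) = (q:ℕ) then 1 else 0) else 0 := by
  simp only [Dsub, Ehelp, Matrix.of_apply, Matrix.one_apply, ← Fin.val_eq_val, ne_eq]

theorem fin_val_mk (n a : ℕ) (h : a < n) : ((⟨a, h⟩ : Fin n) : ℕ) = a := rfl

theorem ker_lemma {K : Type*} [Field K] (s n d : ℕ) (hs4 : 4 ≤ s) (hd : 2 ≤ d)
    (hn : s + 1 ≤ n) (x : Fin n × Fin d → K)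
    (hx : (Dsub s n d 1 (Ehelp K d)).mulVec x = 0)
    (h0 : ∀ p : Fin d, (p : ℕ) < d - 1 → x (⟨0, by omega⟩, p) = 0) : x = 0 := by
  have hrow : ∀ ip : Fin n × Fin d,
      ∑ jq : Fin n × Fin d, Dsub s n d 1 (Ehelp K d) ip jq * x jq = 0 := by
    intro ip
    have := congrFun hx ip
    simpa [Matrix.mulVec, dotProduct] using this
  -- rows with index ≥ s
  have hge : ∀ (i : Fin n) (p : Fin d), s ≤ (i : ℕ) → x (i, p) = 0 := by
    intro i p hi
    have h := hrow (i, p)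
    rw [Fintype.sum_eq_single (i, p) ?_] at h
    · rw [Dsub_entry] at h
      simp only [fin_val_mk, true_and, and_true, false_and, and_false, not_false_eq_true, not_true, ne_eq, ite_true, ite_false] at h
      split_ifs at h <;> first | contradiction | omega | simpa using h
    · rintro ⟨j, q⟩ hb
      have hb' : ¬((j:ℕ) = (i:ℕ) ∧ (q:ℕ) = (p:ℕ)) := by
        rintro ⟨h1, h2⟩; exact hb (Prod.ext (Fin.ext h1) (Fin.ext h2))
      rw [Dsub_entry]
      simp only [fin_val_mk, true_and, and_true, false_and, and_false, not_false_eq_true, not_true, ne_eq, ite_true, ite_false]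
      split_ifs <;> first | contradiction | omega | simp
  -- row 0, coordinates p ≠ 0
  have hr0A : ∀ p : Fin d, (p : ℕ) ≠ 0 → x (⟨1, by omega⟩, p) = 0 := by
    intro p hp
    have h := hrow (⟨0, by omega⟩, p)
    rw [Fintype.sum_eq_single ((⟨1, by omega⟩ : Fin n), p) ?_] at h
    · rw [Dsub_entry] at h
      simp only [fin_val_mk, true_and, and_true, false_and, and_false, not_false_eq_true, not_true, ne_eq, ite_true, ite_false] at h
      split_ifs at h <;> first | contradiction | omega | simpa using h
    · rintro ⟨j, q⟩ hb
      have hb' : ¬((j:ℕ) = 1 ∧ (q:ℕ) = (p:ℕ)) := by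
        rintro ⟨h1, h2⟩; exact hb (Prod.ext (Fin.ext h1) (Fin.ext h2))
      rw [Dsub_entry]
      simp only [fin_val_mk, true_and, and_true, false_and, and_false, not_false_eq_true, not_true, ne_eq, ite_true, ite_false]
      split_ifs <;> first | contradiction | omega | simp
  -- row 0, coordinate 0
  have hr0B : x (⟨1, by omega⟩, ⟨0, by omega⟩) = -x (⟨0, by omega⟩, ⟨d-1, by omega⟩) := by
    have h := hrow (⟨0, by omega⟩, ⟨0, by omega⟩)
    rw [Fintype.sum_eq_add ((⟨0, by omega⟩ : Fin n), (⟨d-1, by omega⟩ : Fin d))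
        ((⟨1, by omega⟩ : Fin n), (⟨0, by omega⟩ : Fin d))
        (by intro hc; have h1 := congrArg (fun z => (z.1 : ℕ)) hc; have h2 := congrArg (fun z => (z.2 : ℕ)) hc; simp only [fin_val_mk] at h1 h2; omega) ?_] at h
    · rw [Dsub_entry, Dsub_entry] at h
      simp only [fin_val_mk, true_and, and_true, false_and, and_false, not_false_eq_true, not_true, ne_eq, ite_true, ite_false] at h
      split_ifs at h <;> first | contradiction | omega | (simp at h; first | exact eq_neg_of_add_eq_zero_right h | exact eq_neg_of_add_eq_zero_left h | exact h | exact (neg_add_eq_zero.mp h).symm | exact neg_add_eq_zero.mp h | linear_combination h | linear_combination -h)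
    · rintro ⟨j, q⟩ ⟨hb1, hb2⟩
      have hb1' : ¬((j:ℕ) = 0 ∧ (q:ℕ) = d-1) := by
        rintro ⟨h1, h2⟩; exact hb1 (Prod.ext (Fin.ext h1) (Fin.ext h2))
      have hb2' : ¬((j:ℕ) = 1 ∧ (q:ℕ) = 0) := by
        rintro ⟨h1, h2⟩; exact hb2 (Prod.ext (Fin.ext h1) (Fin.ext h2))
      rw [Dsub_entry]
      simp only [fin_val_mk, true_and, and_true, false_and, and_false, not_false_eq_true, not_true, ne_eq, ite_true, ite_false]
      split_ifs <;> first | contradiction | omega | simp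
  -- middle rows, coordinates p ≠ 0
  have hmidA : ∀ (i : Fin n) (_ : 1 ≤ (i:ℕ)) (_ : (i:ℕ) ≤ s - 2) (p : Fin d), (p : ℕ) ≠ 0 →
      x (⟨(i:ℕ) + 1, by omega⟩, p) = 0 := by
    intro i hi1 hi2 p hp
    have h := hrow (i, p)
    rw [Fintype.sum_eq_single ((⟨(i:ℕ)+1, by omega⟩ : Fin n), p) ?_] at h
    · rw [Dsub_entry] at h
      simp only [fin_val_mk, true_and, and_true, false_and, and_false, not_false_eq_true, not_true, ne_eq, ite_true, ite_false] at h
      split_ifs at h <;> first | contradiction | omega | simpa using h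
    · rintro ⟨j, q⟩ hb
      have hb' : ¬((j:ℕ) = (i:ℕ)+1 ∧ (q:ℕ) = (p:ℕ)) := by
        rintro ⟨h1, h2⟩; exact hb (Prod.ext (Fin.ext h1) (Fin.ext h2))
      rw [Dsub_entry]
      simp only [fin_val_mk, true_and, and_true, false_and, and_false, not_false_eq_true, not_true, ne_eq, ite_true, ite_false]
      split_ifs <;> first | contradiction | omega | simp
  -- middle rows, coordinate 0
  have hmidB : ∀ (i : Fin n) (_ : 1 ≤ (i:ℕ)) (_ : (i:ℕ) ≤ s - 2),
      x (⟨(i:ℕ) + 1, by omega⟩, ⟨0, by omega⟩) = x (i, ⟨d-1, by omega⟩) := by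
    intro i hi1 hi2
    have h := hrow (i, ⟨0, by omega⟩)
    rw [Fintype.sum_eq_add (i, (⟨d-1, by omega⟩ : Fin d))
        ((⟨(i:ℕ)+1, by omega⟩ : Fin n), (⟨0, by omega⟩ : Fin d))
        (by intro hc; have h1 := congrArg (fun z => (z.1 : ℕ)) hc; have h2 := congrArg (fun z => (z.2 : ℕ)) hc; simp only [fin_val_mk] at h1 h2; omega) ?_] at h
    · rw [Dsub_entry, Dsub_entry] at h
      simp only [fin_val_mk, true_and, and_true, false_and, and_false, not_false_eq_true, not_true, ne_eq, ite_true, ite_false] at h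
      split_ifs at h <;> first | contradiction | omega | (simp at h; first | exact eq_neg_of_add_eq_zero_right h | exact eq_neg_of_add_eq_zero_left h | exact h | exact (neg_add_eq_zero.mp h).symm | exact neg_add_eq_zero.mp h | linear_combination h | linear_combination -h)
    · rintro ⟨j, q⟩ ⟨hb1, hb2⟩
      have hb1' : ¬((j:ℕ) = (i:ℕ) ∧ (q:ℕ) = d-1) := by
        rintro ⟨h1, h2⟩; exact hb1 (Prod.ext (Fin.ext h1) (Fin.ext h2))
      have hb2' : ¬((j:ℕ) = (i:ℕ)+1 ∧ (q:ℕ) = 0) := by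
        rintro ⟨h1, h2⟩; exact hb2 (Prod.ext (Fin.ext h1) (Fin.ext h2))
      rw [Dsub_entry]
      simp only [fin_val_mk, true_and, and_true, false_and, and_false, not_false_eq_true, not_true, ne_eq, ite_true, ite_false]
      split_ifs <;> first | contradiction | omega | simp
  -- last Higman row
  have hrlast : x (⟨0, by omega⟩, ⟨d-1, by omega⟩) = -x (⟨s-1, by omega⟩, ⟨d-1, by omega⟩) := by
    have h := hrow (⟨s-1, by omega⟩, ⟨0, by omega⟩)
    rw [Fintype.sum_eq_add ((⟨s-1, by omega⟩ : Fin n), (⟨d-1, by omega⟩ : Fin d))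
        ((⟨0, by omega⟩ : Fin n), (⟨d-1, by omega⟩ : Fin d))
        (by intro hc; have h1 := congrArg (fun z => (z.1 : ℕ)) hc; have h2 := congrArg (fun z => (z.2 : ℕ)) hc; simp only [fin_val_mk] at h1 h2; omega) ?_] at h
    · rw [Dsub_entry, Dsub_entry] at h
      simp only [fin_val_mk, true_and, and_true, false_and, and_false, not_false_eq_true, not_true, ne_eq, ite_true, ite_false] at h
      split_ifs at h <;> first | contradiction | omega | (simp at h; first | exact eq_neg_of_add_eq_zero_right h | exact eq_neg_of_add_eq_zero_left h | exact h | exact (neg_add_eq_zero.mp h).symm | exact neg_add_eq_zero.mp h | linear_combination h | linear_combination -h)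
    · rintro ⟨j, q⟩ ⟨hb1, hb2⟩
      have hb1' : ¬((j:ℕ) = s-1 ∧ (q:ℕ) = d-1) := by
        rintro ⟨h1, h2⟩; exact hb1 (Prod.ext (Fin.ext h1) (Fin.ext h2))
      have hb2' : ¬((j:ℕ) = 0 ∧ (q:ℕ) = d-1) := by
        rintro ⟨h1, h2⟩; exact hb2 (Prod.ext (Fin.ext h1) (Fin.ext h2))
      rw [Dsub_entry]
      simp only [fin_val_mk, true_and, and_true, false_and, and_false, not_false_eq_true, not_true, ne_eq, ite_true, ite_false]
      split_ifs <;> first | contradiction | omega | simp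
  -- now chain the equations
  have h1l : x (⟨1, by omega⟩, ⟨d-1, by omega⟩) = 0 := hr0A _ (by simp only [fin_val_mk]; omega)
  have hind : ∀ (k : ℕ) (_ : 2 ≤ k) (_ : k ≤ s - 1) (p : Fin d), x (⟨k, by omega⟩, p) = 0 := by
    intro k hk2
    induction k, hk2 using Nat.le_induction with
    | base =>
      intro _ p
      by_cases hp : (p : ℕ) = 0
      · have hp' : p = ⟨0, by omega⟩ := Fin.ext hp
        rw [hp']
        have := hmidB ⟨1, by omega⟩ (by simp only [fin_val_mk]; omega) (by simp only [fin_val_mk]; omega)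
        simpa [h1l] using this
      · exact hmidA ⟨1, by omega⟩ (by simp only [fin_val_mk]; omega) (by simp only [fin_val_mk]; omega) p hp
    | succ k hk2 ih =>
      intro hks p
      have hks' : k ≤ s - 1 := by omega
      by_cases hp : (p : ℕ) = 0
      · have hp' : p = ⟨0, by omega⟩ := Fin.ext hp
        rw [hp']
        have := hmidB ⟨k, by omega⟩ (by simp only [fin_val_mk]; omega) (by simp only [fin_val_mk]; omega)
        simpa [ih hks' ⟨d-1, by omega⟩] using this
      · exact hmidA ⟨k, by omega⟩ (by simp only [fin_val_mk]; omega) (by simp only [fin_val_mk]; omega) p hp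
  have h0l : x (⟨0, by omega⟩, ⟨d-1, by omega⟩) = 0 := by
    rw [hrlast, hind (s-1) (by omega) (le_refl _)]
    simp
  have hx0 : ∀ p : Fin d, x (⟨0, by omega⟩, p) = 0 := by
    intro p
    by_cases hp : (p : ℕ) < d - 1
    · exact h0 p hp
    · have hp' : p = ⟨d-1, by omega⟩ := Fin.ext (by simp only [fin_val_mk]; omega)
      rw [hp']; exact h0l
  have hx1 : ∀ p : Fin d, x (⟨1, by omega⟩, p) = 0 := by
    intro p
    by_cases hp : (p : ℕ) = 0
    · have hp' : p = ⟨0, by omega⟩ := Fin.ext hp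
      rw [hp', hr0B, h0l, neg_zero]
    · exact hr0A p hp
  funext ip
  obtain ⟨i, p⟩ := ip
  obtain h | h | ⟨h2, h3⟩ | h : (i:ℕ) = 0 ∨ (i:ℕ) = 1 ∨ (2 ≤ (i:ℕ) ∧ (i:ℕ) ≤ s-1) ∨ s ≤ (i:ℕ) := by
    omega
  · have : i = ⟨0, by omega⟩ := Fin.ext h
    rw [this]; exact hx0 p
  · have : i = ⟨1, by omega⟩ := Fin.ext h
    rw [this]; exact hx1 p
  · have : i = ⟨(i:ℕ), i.isLt⟩ := Fin.ext rfl
    rw [this]; exact hind (i:ℕ) h2 h3 p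
  · exact hge i p h

theorem stmt_8 (K : Type*) [Field K] [Fintype K] (q d : ℕ) (hq : Fintype.card K = q)
    (hd : 2 ≤ d) (s : ℕ) (hs : s = q ^ d) (n : ℕ) (hn : s + 1 ≤ n) :
    ∃ A₀ A₁ : Matrix (Fin d) (Fin d) K, (n - 1) * d < (Dsub s n d A₀ A₁).rank := by
  have hK : 2 ≤ q := by rw [← hq]; exact Fintype.one_lt_card
  have hs4 : 4 ≤ s := by
    subst hs
    calc (4:ℕ) = 2^2 := by norm_num
      _ ≤ 2^d := Nat.pow_le_pow_right (by norm_num) hd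
      _ ≤ q^d := Nat.pow_le_pow_left hK d
  refine ⟨1, Ehelp K d, ?_⟩
  have hrn := LinearMap.finrank_range_add_finrank_ker (Dsub s n d 1 (Ehelp K d)).mulVecLin
  have hdim : Module.finrank K (Fin n × Fin d → K) = n * d := by
    simp [Module.finrank_pi]
  rw [hdim] at hrn
  have hker : Module.finrank K (LinearMap.ker (Dsub s n d 1 (Ehelp K d)).mulVecLin) ≤ d - 1 := by
    have hinj : Function.Injective
        ((LinearMap.funLeft K K (fun p : Fin (d-1) =>
            ((⟨0, by omega⟩ : Fin n), (⟨(p:ℕ), by omega⟩ : Fin d)))).comp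
          (LinearMap.ker (Dsub s n d 1 (Ehelp K d)).mulVecLin).subtype) := by
      rw [← LinearMap.ker_eq_bot, Submodule.eq_bot_iff]
      rintro ⟨x, hxk⟩ hy
      have hψ := LinearMap.mem_ker.mp hy
      have hx' : (Dsub s n d 1 (Ehelp K d)).mulVec x = 0 := by
        have := LinearMap.mem_ker.mp hxk
        simpa [Matrix.mulVecLin_apply] using this
      have h0 : ∀ p : Fin d, (p:ℕ) < d - 1 → x (⟨0, by omega⟩, p) = 0 := by
        intro p hp
        have h2 := congrFun hψ ⟨(p:ℕ), hp⟩
        simp only [LinearMap.comp_apply, LinearMap.funLeft_apply, Submodule.coe_subtype,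
          Pi.zero_apply] at h2
        exact h2
      exact Subtype.ext (ker_lemma s n d hs4 hd hn x hx' h0)
    calc Module.finrank K (LinearMap.ker (Dsub s n d 1 (Ehelp K d)).mulVecLin)
        ≤ Module.finrank K (Fin (d-1) → K) := LinearMap.finrank_le_finrank_of_injective hinj
      _ = d - 1 := by simp [Module.finrank_pi]
  have hrank : (Dsub s n d 1 (Ehelp K d)).rank
      = Module.finrank K (LinearMap.range (Dsub s n d 1 (Ehelp K d)).mulVecLin) := rfl
  rw [hrank]
  have hd1 : (n-1)*d + d = n*d := by
    conv_rhs => rw [← Nat.sub_add_cancel (show 1 ≤ n by omega)]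
    ring
  generalize hT : n*d = T at hrn hd1
  generalize hN : (n-1)*d = N at hd1 ⊢
  omega
end

section
/- Let d ≥ 2 and let f be a polynomial with coefficients in a field K (or more generally a noncommutative polynomial in m variables). Suppose L_f is an m' × m' linear matrix satisfying the Higman property: for all d × d matrices A_1, ..., A_m, rank(L_f(I_d, A_1, ..., A_m)) = (m'−1)d + rank(f(A_1,...,A_m)). Suppose f(A_1,...,A_m) is singular for all tuples of d × d matrices over K, but f(B_1,...,B_m) ≠ 0 for some tuple. Then for any r ≥ 1, the blow-up rank rk(D_{f,r}^{{d,d}}) of the linear matrix D_{f,r} = diag(L_f, t_0 I_r) satisfies (m'+r−1)d < rk(D_{f,r}^{{d,d}}) < (m'+r)d; in particular it is not divisible by d. -/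
open Kronecker

section auxiliary

open Matrix Module

variable {K : Type*} [Field K]

lemma aux_range_prodMap {V W V' W' : Type*} [AddCommGroup V] [Module K V]
    [AddCommGroup W] [Module K W] [AddCommGroup V'] [Module K V'] [AddCommGroup W'] [Module K W']
    (f : V →ₗ[K] V') (g : W →ₗ[K] W') :
    LinearMap.range (f.prodMap g) = (LinearMap.range f).prod (LinearMap.range g) := by
  ext ⟨y₁, y₂⟩
  simp only [LinearMap.mem_range, Submodule.mem_prod, LinearMap.prodMap_apply, Prod.mk.injEq]
  constructor
  · rintro ⟨⟨x₁, x₂⟩, h₁, h₂⟩; exact ⟨⟨x₁, h₁⟩, ⟨x₂, h₂⟩⟩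
  · rintro ⟨⟨x₁, h₁⟩, ⟨x₂, h₂⟩⟩; exact ⟨(x₁, x₂), h₁, h₂⟩

/-- the product of two submodules is linearly equivalent to the product type -/
noncomputable def auxProdEquiv {V W : Type*} [AddCommGroup V] [Module K V]
    [AddCommGroup W] [Module K W] (p : Submodule K V) (q : Submodule K W) :
    (p.prod q) ≃ₗ[K] p × q where
  toFun x := (⟨x.1.1, (Submodule.mem_prod.mp x.2).1⟩, ⟨x.1.2, (Submodule.mem_prod.mp x.2).2⟩)
  invFun x := ⟨(x.1.1, x.2.1), Submodule.mem_prod.mpr ⟨x.1.2, x.2.2⟩⟩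
  map_add' _ _ := rfl
  map_smul' _ _ := rfl
  left_inv _ := rfl
  right_inv _ := rfl

lemma aux_finrank_prod {V W : Type*} [AddCommGroup V] [Module K V]
    [AddCommGroup W] [Module K W] [FiniteDimensional K V] [FiniteDimensional K W]
    (p : Submodule K V) (q : Submodule K W) :
    finrank K (p.prod q) = finrank K p + finrank K q :=
  (auxProdEquiv p q).finrank_eq.trans (Module.finrank_prod)

lemma aux_rank_fromBlocks {n₁ n₂ : Type*} [Fintype n₁] [Fintype n₂] [DecidableEq n₁]
    [DecidableEq n₂] (A : Matrix n₁ n₁ K) (D : Matrix n₂ n₂ K) :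
    (Matrix.fromBlocks A 0 0 D).rank = A.rank + D.rank := by
  set e := LinearEquiv.sumArrowLequivProdArrow n₁ n₂ K K
  have h : (Matrix.fromBlocks A 0 0 D).mulVecLin
      = e.symm.toLinearMap ∘ₗ (A.mulVecLin.prodMap D.mulVecLin) ∘ₗ e.toLinearMap := by
    apply LinearMap.ext; intro x
    ext i
    cases i <;>
      simp [e, Matrix.fromBlocks_mulVec, Equiv.sumArrowEquivProdArrow,
        LinearEquiv.sumArrowLequivProdArrow]
  rw [Matrix.rank, Matrix.rank, Matrix.rank, h, LinearMap.range_comp, LinearMap.range_comp,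
    LinearEquiv.range, Submodule.map_top, LinearEquiv.finrank_map_eq, aux_range_prodMap,
    aux_finrank_prod]

lemma aux_rank_lt_card {n : Type*} [Fintype n] [DecidableEq n] (M : Matrix n n K)
    (h : ¬ IsUnit M) : M.rank < Fintype.card n := by
  rcases lt_or_eq_of_le M.rank_le_card_width with h' | h'
  · exact h'
  · exfalso
    apply h
    rw [← Matrix.mulVec_surjective_iff_isUnit]
    have : LinearMap.range M.mulVecLin = ⊤ := by
      apply Submodule.eq_top_of_finrank_eq
      rw [← Matrix.rank, h', Module.finrank_fintype_fun_eq_card]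
    intro y
    have := this ▸ Submodule.mem_top (x := y)
    obtain ⟨x, hx⟩ := this
    exact ⟨x, hx⟩

lemma aux_rank_eq_zero {m n : Type*} [Fintype n] [Fintype m] [DecidableEq n]
    (M : Matrix m n K) (h : M.rank = 0) : M = 0 := by
  rw [Matrix.rank] at h
  have h2 : LinearMap.range M.mulVecLin = ⊥ := Submodule.finrank_eq_zero.mp h
  ext i j
  have : M.mulVec (Pi.single j 1) = 0 := by
    have := h2 ▸ LinearMap.mem_range_self M.mulVecLin (Pi.single j 1)
    simpa using this
  have := congrFun this i
  simpa [Matrix.mulVec_single] using this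

lemma aux_block_decomp {m m' r d : ℕ}
    (X : Fin (m + 1) → Matrix (Fin m') (Fin m') K)
    (Y : Fin (m + 1) → Matrix (Fin m' ⊕ Fin r) (Fin m' ⊕ Fin r) K)
    (hY : ∀ i, Y i = Matrix.fromBlocks (X i) 0 0 (if i = 0 then 1 else 0))
    (B : Fin (m + 1) → Matrix (Fin d) (Fin d) K) :
    (∑ i, (Y i) ⊗ₖ (B i)).rank
      = (∑ i, (X i) ⊗ₖ (B i)).rank + ((1 : Matrix (Fin r) (Fin r) K) ⊗ₖ (B 0)).rank := by
  set e : ((Fin m' × Fin d) ⊕ (Fin r × Fin d)) ≃ ((Fin m' ⊕ Fin r) × Fin d) :=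
    (Equiv.sumProdDistrib _ _ _).symm with he
  have hB : (∑ i : Fin (m+1), (if i = 0 then (1 : Matrix (Fin r) (Fin r) K) else 0) ⊗ₖ B i)
      = (1 : Matrix (Fin r) (Fin r) K) ⊗ₖ B 0 := by
    rw [Fin.sum_univ_succ]
    simp [Fin.succ_ne_zero]
  have key : (∑ i, Y i ⊗ₖ B i).submatrix e e
      = Matrix.fromBlocks (∑ i, X i ⊗ₖ B i) 0 0 ((1 : Matrix (Fin r) (Fin r) K) ⊗ₖ B 0) := by
    rw [← hB]
    ext i j
    rcases i with ⟨a, x⟩ | ⟨a, x⟩ <;> rcases j with ⟨b, y⟩ | ⟨b, y⟩ <;>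
      simp [he, hY, Matrix.sum_apply, Matrix.submatrix_apply, Equiv.sumProdDistrib,
        Matrix.fromBlocks, apply_ite]
  rw [← Matrix.rank_submatrix _ e e, key, aux_rank_fromBlocks]

end auxiliary

/-- The `(d,d)`-blow-up rank of the linear matrix `Σᵢ tᵢ Yᵢ` (coefficient matrices
`Y 0, …, Y m`): the maximal rank of `Σᵢ Yᵢ ⊗ Bᵢ` over all `d × d` matrices `B 0, …, B m`. -/
noncomputable def linBlowupRank {K ι : Type*} [Field K] [Fintype ι] [DecidableEq ι] (m d : ℕ)
    (Y : Fin (m + 1) → Matrix ι ι K) : ℕ :=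
  sSup {t | ∃ B : Fin (m + 1) → Matrix (Fin d) (Fin d) K, t = (∑ i, (Y i) ⊗ₖ (B i)).rank}

theorem stmt_10 (K : Type*) [Field K] (d : ℕ) (hd : 2 ≤ d) (m m' r : ℕ) (hr : 1 ≤ r)
    (f : FreeAlgebra K (Fin m))
    -- `X 0, …, X m` are the coefficient matrices of the `m' × m'` linear matrix
    -- `L_f(t₀, …, t_m) = Σᵢ tᵢ Xᵢ`
    (X : Fin (m + 1) → Matrix (Fin m') (Fin m') K)
    -- the Higman property of `L_f`:
    (hHigman : ∀ A : Fin m → Matrix (Fin d) (Fin d) K,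
      (∑ i, (X i) ⊗ₖ ((Fin.cons 1 A : Fin (m + 1) → Matrix (Fin d) (Fin d) K) i)).rank
        = (m' - 1) * d + ((FreeAlgebra.lift K A) f).rank)
    (hsing : ∀ A : Fin m → Matrix (Fin d) (Fin d) K, ¬ IsUnit ((FreeAlgebra.lift K A) f))
    (hnz : ∃ B : Fin m → Matrix (Fin d) (Fin d) K, (FreeAlgebra.lift K B) f ≠ 0)
    -- `Y` is the coefficient-matrix family of `D_{f,r} = diag(L_f, t₀ I_r)`
    (Y : Fin (m + 1) → Matrix (Fin m' ⊕ Fin r) (Fin m' ⊕ Fin r) K)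
    (hY : ∀ i, Y i = Matrix.fromBlocks (X i) 0 0 (if i = 0 then 1 else 0)) :
    (m' + r - 1) * d < linBlowupRank m d Y ∧ linBlowupRank m d Y < (m' + r) * d ∧
      ¬ (d ∣ linBlowupRank m d Y) := by
  obtain ⟨Bw, hBw⟩ := hnz
  have hd0 : 0 < d := by omega
  -- m' ≥ 1
  have hm' : 1 ≤ m' := by
    by_contra h
    have hm0 : m' = 0 := by omega
    have h1 : (∑ i, (X i) ⊗ₖ ((Fin.cons 1 Bw : Fin (m + 1) → Matrix (Fin d) (Fin d) K) i)).rank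
        = 0 := by
      have := Matrix.rank_le_card_width
        (∑ i, (X i) ⊗ₖ ((Fin.cons 1 Bw : Fin (m + 1) → Matrix (Fin d) (Fin d) K) i))
      simp [hm0] at this
      omega
    have := hHigman Bw
    rw [h1, hm0] at this
    exact hBw (aux_rank_eq_zero _ (by omega))
  obtain ⟨m'', rfl⟩ : ∃ m'', m' = m'' + 1 := ⟨m' - 1, by omega⟩
  set S := {t | ∃ B : Fin (m + 1) → Matrix (Fin d) (Fin d) K,
    t = (∑ i, (Y i) ⊗ₖ (B i)).rank} with hS
  -- strict upper bound on every element of S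
  have hub : ∀ t ∈ S, t < (m'' + 1 + r) * d := by
    rintro t ⟨B, rfl⟩
    rw [aux_block_decomp X Y hY B]
    by_cases hB0 : IsUnit (B 0)
    · have hdet : IsUnit (B 0).det := (Matrix.isUnit_iff_isUnit_det _).mp hB0
      set A : Fin m → Matrix (Fin d) (Fin d) K := fun j => (B 0)⁻¹ * B j.succ with hA
      have hcons : ∀ i, (Fin.cons 1 A : Fin (m + 1) → Matrix (Fin d) (Fin d) K) i
          = (B 0)⁻¹ * B i := by
        intro i
        refine Fin.cases ?_ (fun j => ?_) i
        · rw [Fin.cons_zero, Matrix.nonsing_inv_mul _ hdet]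
        · rw [Fin.cons_succ]
      have htop : (∑ i, X i ⊗ₖ B i)
          = ((1 : Matrix (Fin (m'' + 1)) (Fin (m'' + 1)) K) ⊗ₖ B 0)
            * (∑ i, X i ⊗ₖ ((Fin.cons 1 A : Fin (m + 1) → Matrix (Fin d) (Fin d) K) i)) := by
        rw [Finset.mul_sum]
        refine Finset.sum_congr rfl fun i _ => ?_
        rw [hcons, ← Matrix.mul_kronecker_mul, Matrix.one_mul, ← Matrix.mul_assoc,
          Matrix.mul_nonsing_inv _ hdet, Matrix.one_mul]
      have hrk : (∑ i, X i ⊗ₖ B i).rank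
          = (∑ i, X i ⊗ₖ ((Fin.cons 1 A : Fin (m + 1) → Matrix (Fin d) (Fin d) K) i)).rank := by
        rw [htop]
        refine Matrix.rank_mul_eq_right_of_isUnit_det _ _ ?_
        rw [Matrix.det_kronecker]
        simp only [Matrix.det_one, one_pow, one_mul]
        exact hdet.pow _
      have hf : ((FreeAlgebra.lift K A) f).rank < d := by
        have := aux_rank_lt_card _ (hsing A)
        simpa using this
      have hbot : ((1 : Matrix (Fin r) (Fin r) K) ⊗ₖ (B 0)).rank ≤ r * d := by
        have := Matrix.rank_le_card_width ((1 : Matrix (Fin r) (Fin r) K) ⊗ₖ (B 0))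
        simpa using this
      rw [hrk, hHigman A]
      have hring : (m'' + 1 + r) * d = (m'' + 1 - 1) * d + d + r * d := by
        simp; ring
      omega
    · have h1 : (∑ i, X i ⊗ₖ B i).rank ≤ (m'' + 1) * d := by
        have := Matrix.rank_le_card_width (∑ i, X i ⊗ₖ B i)
        simpa using this
      have h2 : ((1 : Matrix (Fin r) (Fin r) K) ⊗ₖ (B 0)).rank < r * d := by
        have hu : ¬ IsUnit ((1 : Matrix (Fin r) (Fin r) K) ⊗ₖ (B 0)) := by
          intro hu
          apply hB0
          rw [Matrix.isUnit_iff_isUnit_det] at hu ⊢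
          rw [Matrix.det_kronecker] at hu
          simp only [Matrix.det_one, one_pow, one_mul, Fintype.card_fin] at hu
          exact (isUnit_pow_iff (by omega : r ≠ 0)).mp hu
        have := aux_rank_lt_card _ hu
        simpa using this
      have hring : (m'' + 1 + r) * d = (m'' + 1) * d + r * d := by ring
      omega
  -- bounded above
  have hbdd : BddAbove S := ⟨(m'' + 1 + r) * d, fun t ht => le_of_lt (hub t ht)⟩
  -- witness for lower bound
  set Bc : Fin (m + 1) → Matrix (Fin d) (Fin d) K := Fin.cons 1 Bw with hBc
  have hwit : ((m'' + r) * d + 1) ≤ (∑ i, (Y i) ⊗ₖ (Bc i)).rank := by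
    rw [aux_block_decomp X Y hY Bc]
    have hBc0 : Bc 0 = 1 := Fin.cons_zero _ _
    have hbot : ((1 : Matrix (Fin r) (Fin r) K) ⊗ₖ (Bc 0)).rank = r * d := by
      rw [hBc0, Matrix.one_kronecker_one, Matrix.rank_one]
      simp
    have htop := hHigman Bw
    have hfpos : 1 ≤ ((FreeAlgebra.lift K Bw) f).rank := by
      rcases Nat.eq_zero_or_pos ((FreeAlgebra.lift K Bw) f).rank with h | h
      · exact absurd (aux_rank_eq_zero _ h) hBw
      · exact h
    rw [hbot]
    have : (∑ i, (X i) ⊗ₖ (Bc i)).rank = (m'' + 1 - 1) * d + ((FreeAlgebra.lift K Bw) f).rank :=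
      htop
    have hring : (m'' + r) * d = (m'' + 1 - 1) * d + r * d := by simp; ring
    omega
  have hlow : (m'' + r) * d + 1 ≤ linBlowupRank m d Y :=
    le_trans hwit (le_csSup hbdd ⟨Bc, rfl⟩)
  have hmem : linBlowupRank m d Y ∈ S :=
    Nat.sSup_mem ⟨(∑ i, (Y i) ⊗ₖ ((fun _ => 0 : Fin (m + 1) → Matrix (Fin d) (Fin d) K) i)).rank,
      ⟨fun _ => 0, rfl⟩⟩ hbdd
  have hupper : linBlowupRank m d Y < (m'' + 1 + r) * d := hub _ hmem
  refine ⟨?_, hupper, ?_⟩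
  · have : (m'' + 1 + r - 1) * d = (m'' + r) * d := by
      congr 1
      omega
    omega
  · rintro ⟨k, hk⟩
    have h1 : (m'' + r) * d < d * k := by omega
    have h2 : d * k < (m'' + 1 + r) * d := by omega
    rw [mul_comm d k] at h1 h2
    have := Nat.lt_of_mul_lt_mul_right h1
    have := Nat.lt_of_mul_lt_mul_right h2
    omega
end

section
/- Let K be a field, A an invertible d × d matrix, and B any d × d matrix over K. For the s × s Higman linearization L of T^s − T, rank(L(A, B)) = (s−1)d + rank(C^s − C), where C = A^{-1}B. -/
namespace Stmt12Aux

variable {K : Type*} [Field K]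

def blk (s d : ℕ) (f : Fin s → Fin s → Matrix (Fin d) (Fin d) K) :
    Matrix (Fin s × Fin d) (Fin s × Fin d) K :=
  Matrix.of fun p q => f p.1 q.1 p.2 q.2

lemma blk_mul (s d : ℕ) (f g : Fin s → Fin s → Matrix (Fin d) (Fin d) K) :
    blk s d f * blk s d g = blk s d (fun i k => ∑ j, f i j * g j k) := by
  ext p q
  simp only [blk, Matrix.mul_apply, Matrix.of_apply, Fintype.sum_prod_type,
    Matrix.sum_apply, Matrix.mul_apply]

lemma blk_one (s d : ℕ) :
    blk s d (fun i k => if i = k then (1 : Matrix (Fin d) (Fin d) K) else 0) = 1 := by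
  ext p q
  simp only [blk, Matrix.of_apply, Matrix.one_apply, Prod.ext_iff]
  rcases eq_or_ne p.1 q.1 with h | h <;> rcases eq_or_ne p.2 q.2 with h2 | h2 <;>
    simp [h, h2, Matrix.one_apply]

lemma fin_sum_eq_single {M : Type*} [AddCommMonoid M] {s : ℕ} (g : Fin s → M) (t : Fin s)
    (h : ∀ j, j ≠ t → g j = 0) : ∑ j, g j = g t :=
  Finset.sum_eq_single_of_mem t (Finset.mem_univ t) (fun j _ hj => h j hj)

lemma fin_sum_eq_pair {M : Type*} [AddCommMonoid M] {s : ℕ} (g : Fin s → M) (t₁ t₂ : Fin s)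
    (h12 : t₁ ≠ t₂) (h : ∀ j, j ≠ t₁ → j ≠ t₂ → g j = 0) : ∑ j, g j = g t₁ + g t₂ := by
  rw [← Finset.sum_pair h12]
  exact (Finset.sum_subset (Finset.subset_univ _)
    (fun j _ hj => by simp only [Finset.mem_insert, Finset.mem_singleton, not_or] at hj
                      exact h j hj.1 hj.2)).symm

variable {d : ℕ}

def fL (s : ℕ) (B₀ B₁ : Matrix (Fin d) (Fin d) K) (i k : Fin s) : Matrix (Fin d) (Fin d) K :=
  (if i = k then (if (i:ℕ) = 0 then B₁ else -B₁) else 0)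
  + (if (k:ℕ) = (i:ℕ) + 1 then B₀ else 0)
  + (if (i:ℕ) = s - 1 ∧ (k:ℕ) = 0 ∧ i ≠ k then -B₁ else 0)

def fA (s : ℕ) (A : Matrix (Fin d) (Fin d) K) (i k : Fin s) : Matrix (Fin d) (Fin d) K :=
  if i = k then A else 0

def fP (s : ℕ) (C : Matrix (Fin d) (Fin d) K) (i k : Fin s) : Matrix (Fin d) (Fin d) K :=
  if (k:ℕ) ≤ (i:ℕ) then C^((i:ℕ)-(k:ℕ)) else 0

def fPinv (s : ℕ) (C : Matrix (Fin d) (Fin d) K) (i k : Fin s) : Matrix (Fin d) (Fin d) K :=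
  (if i = k then 1 else 0) + (if (i:ℕ) = (k:ℕ)+1 then -C else 0)

def fQ (s : ℕ) (C : Matrix (Fin d) (Fin d) K) (i k : Fin s) : Matrix (Fin d) (Fin d) K :=
  (if i = k then 1 else 0) + (if (k:ℕ) = 0 ∧ ¬ (i:ℕ) = 0 then -(C^(i:ℕ)) else 0)

def fQinv (s : ℕ) (C : Matrix (Fin d) (Fin d) K) (i k : Fin s) : Matrix (Fin d) (Fin d) K :=
  (if i = k then 1 else 0) + (if (k:ℕ) = 0 ∧ ¬ (i:ℕ) = 0 then C^(i:ℕ) else 0)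

def fPL (s : ℕ) (C : Matrix (Fin d) (Fin d) K) (i k : Fin s) : Matrix (Fin d) (Fin d) K :=
  (if (k:ℕ) = (i:ℕ)+1 then 1 else 0) + (if (k:ℕ) = 0 then C^((i:ℕ)+1) else 0)
  + (if (i:ℕ) = s-1 ∧ (k:ℕ) = 0 then -C else 0)

def fM (s : ℕ) (C : Matrix (Fin d) (Fin d) K) (i k : Fin s) : Matrix (Fin d) (Fin d) K :=
  (if (k:ℕ) = (i:ℕ)+1 then 1 else 0) + (if (i:ℕ) = s-1 ∧ (k:ℕ) = 0 then C^s - C else 0)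

lemma id1 (s : ℕ) (A B C : Matrix (Fin d) (Fin d) K) (hAB : A * C = B) (i k : Fin s) :
    ∑ j, fA s A i j * fL s 1 C j k = fL s A B i k := by
  rw [fin_sum_eq_single _ i (fun j hj => by
    rw [fA, if_neg (fun h => hj h.symm), zero_mul])]
  rw [fA, if_pos rfl, fL, fL]
  simp only [mul_add, mul_ite, mul_zero, mul_one, mul_neg, hAB]

lemma idA (s : ℕ) (A A' : Matrix (Fin d) (Fin d) K) (hAA : A' * A = 1) (i k : Fin s) :
    ∑ j, fA s A' i j * fA s A j k = if i = k then 1 else 0 := by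
  rw [fin_sum_eq_single _ i (fun j hj => by
    rw [fA, if_neg (fun h => hj h.symm), zero_mul])]
  rw [fA, if_pos rfl, fA]
  simp only [mul_ite, mul_zero, hAA]

lemma id2 (s : ℕ) (C : Matrix (Fin d) (Fin d) K) (i k : Fin s) :
    ∑ j, fPinv s C i j * fP s C j k = if i = k then 1 else 0 := by
  have hilt := i.isLt
  have hklt := k.isLt
  by_cases hi : (i:ℕ) = 0
  · rw [fin_sum_eq_single _ i (fun j hj => by
      have h1 : ¬ i = j := fun h => hj h.symm
      have h2 : ¬ (i:ℕ) = (j:ℕ)+1 := by omega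
      rw [fPinv, if_neg h1, if_neg h2, add_zero, zero_mul])]
    have e1 : fPinv s C i i = 1 := by
      rw [fPinv, if_pos rfl, if_neg (by omega), add_zero]
    rw [e1, one_mul, fP]
    by_cases hk : i = k
    · subst hk; rw [if_pos (le_refl _), Nat.sub_self, pow_zero, if_pos rfl]
    · have hk' : ¬ (i:ℕ) = (k:ℕ) := by rw [Fin.ext_iff] at hk; exact hk
      rw [if_neg (by omega), if_neg hk]
  · have hbd : (i:ℕ) - 1 < s := by omega
    have hti : i ≠ (⟨(i:ℕ)-1, hbd⟩ : Fin s) := by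
      intro h; rw [Fin.ext_iff] at h; simp only [Fin.val_mk] at h; omega
    rw [fin_sum_eq_pair _ i ⟨(i:ℕ)-1, hbd⟩ hti (fun j hj1 hj2 => by
      have h1 : ¬ i = j := fun h => hj1 h.symm
      have h2 : ¬ (i:ℕ) = (j:ℕ)+1 := by
        have h2' : (j:ℕ) ≠ (i:ℕ)-1 := by simpa using Fin.val_ne_of_ne hj2
        omega
      rw [fPinv, if_neg h1, if_neg h2, add_zero, zero_mul])]
    have e1 : fPinv s C i i = 1 := by
      rw [fPinv, if_pos rfl, if_neg (by omega), add_zero]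
    have e2 : fPinv s C i ⟨(i:ℕ)-1, hbd⟩ = -C := by
      rw [fPinv, if_neg hti, zero_add,
        if_pos (show (i:ℕ) = ((i:ℕ)-1)+1 by omega)]
    rw [e1, one_mul, e2, fP, fP]
    simp only []
    rcases lt_trichotomy ((k:ℕ)) ((i:ℕ)) with h | h | h
    · have hik : ¬ i = k := by rw [Fin.ext_iff]; omega
      rw [if_pos (by omega : (k:ℕ) ≤ (i:ℕ)),
        if_pos (show (k:ℕ) ≤ (i:ℕ)-1 by omega), if_neg hik]
      rw [neg_mul, ← pow_succ']
      have e3 : (((i:ℕ)-1)-(k:ℕ))+1 = (i:ℕ)-(k:ℕ) := by omega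
      rw [e3, add_neg_cancel]
    · have hik : i = k := by rw [Fin.ext_iff]; omega
      rw [if_pos (by omega : (k:ℕ) ≤ (i:ℕ)),
        if_neg (show ¬ (k:ℕ) ≤ (i:ℕ)-1 by omega), mul_zero, add_zero,
        if_pos hik, h, Nat.sub_self, pow_zero]
    · have hik : ¬ i = k := by rw [Fin.ext_iff]; omega
      rw [if_neg (show ¬ (k:ℕ) ≤ (i:ℕ) by omega),
        if_neg (show ¬ (k:ℕ) ≤ (i:ℕ)-1 by omega), mul_zero, add_zero, if_neg hik]

lemma id3 (s : ℕ) (C : Matrix (Fin d) (Fin d) K) (i k : Fin s) :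
    ∑ j, fQ s C i j * fQinv s C j k = if i = k then 1 else 0 := by
  have hilt := i.isLt
  have hklt := k.isLt
  by_cases hi : (i:ℕ) = 0
  · rw [fin_sum_eq_single _ i (fun j hj => by
      rw [fQ, if_neg (fun h => hj h.symm), if_neg (by omega), add_zero, zero_mul])]
    rw [fQ, if_pos rfl, if_neg (fun h : (i:ℕ) = 0 ∧ ¬ (i:ℕ) = 0 => h.2 h.1), add_zero, one_mul, fQinv,
      if_neg (fun h : (k:ℕ) = 0 ∧ ¬ (i:ℕ) = 0 => h.2 hi), add_zero]
  · have hbd : (0:ℕ) < s := by omega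
    have hti : i ≠ (⟨0, hbd⟩ : Fin s) := by
      intro h; rw [Fin.ext_iff] at h; simp only [Fin.val_mk] at h; omega
    rw [fin_sum_eq_pair _ i ⟨0, hbd⟩ hti (fun j hj1 hj2 => by
      have h2 : (j:ℕ) ≠ 0 := by simpa using Fin.val_ne_of_ne hj2
      rw [fQ, if_neg (fun h => hj1 h.symm),
        if_neg (fun h : (j:ℕ) = 0 ∧ ¬ (i:ℕ) = 0 => h2 h.1), add_zero, zero_mul])]
    have e1 : fQ s C i i = 1 := by
      rw [fQ, if_pos rfl, if_neg (fun h : _ ∧ _ => hi h.1), add_zero]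
    have e2 : fQ s C i ⟨0, hbd⟩ = -(C^(i:ℕ)) := by
      rw [fQ, if_neg hti, if_pos ⟨rfl, hi⟩, zero_add]
    rw [e1, one_mul, e2, fQinv, fQinv]
    by_cases hk : (k:ℕ) = 0
    · have h1 : ¬ i = k := by intro h; rw [Fin.ext_iff] at h; omega
      have h2 : (⟨0, hbd⟩ : Fin s) = k := by
        rw [Fin.ext_iff]; simp only [Fin.val_mk]; omega
      rw [if_neg h1, if_pos ⟨hk, hi⟩, zero_add, if_pos h2,
        if_neg (fun h : _ ∧ ¬ ((⟨0, hbd⟩ : Fin s) : ℕ) = 0 => h.2 rfl), add_zero, mul_one,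
        add_neg_cancel]
    · have h2 : ¬ (⟨0, hbd⟩ : Fin s) = k := by
        intro h; rw [Fin.ext_iff] at h; simp only [Fin.val_mk] at h; omega
      rw [if_neg (fun h : (k:ℕ)=0 ∧ _ => hk h.1), add_zero,
        if_neg h2, if_neg (fun h : (k:ℕ)=0 ∧ _ => hk h.1), add_zero, mul_zero, add_zero]

lemma id4 (s : ℕ) (hs : 2 ≤ s) (C : Matrix (Fin d) (Fin d) K) (i k : Fin s) :
    ∑ j, fP s C i j * fL s 1 C j k = fPL s C i k := by
  have hilt := i.isLt
  have hklt := k.isLt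
  by_cases hk : (k:ℕ) = 0
  · have hbd : s - 1 < s := by omega
    have hkl : k ≠ (⟨s-1, hbd⟩ : Fin s) := by
      intro h; rw [Fin.ext_iff] at h; simp only [Fin.val_mk] at h; omega
    rw [fin_sum_eq_pair _ k ⟨s-1, hbd⟩ hkl (fun j hj1 hj2 => by
      have h2 : (j:ℕ) ≠ s-1 := by simpa using Fin.val_ne_of_ne hj2
      rw [fL, if_neg (fun h => hj1 h), if_neg (by omega),
        if_neg (fun h => h2 h.1), add_zero, add_zero, mul_zero])]
    have e1 : fL s 1 C k k = C := by
      rw [fL, if_pos rfl, if_pos hk, if_neg (by omega),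
        if_neg (fun h : _ ∧ _ ∧ k ≠ k => h.2.2 rfl), add_zero, add_zero]
    have e2 : fL s 1 C ⟨s-1, hbd⟩ k = -C := by
      rw [fL, if_neg (fun h => hkl h.symm), if_neg (by simp only [Fin.val_mk]; omega),
        if_pos ⟨rfl, hk, fun h => hkl h.symm⟩, zero_add, zero_add]
    have eP1 : fP s C i k = C^(i:ℕ) := by
      rw [fP, if_pos (show (k:ℕ) ≤ (i:ℕ) by omega)]
      congr 1; omega
    rw [eP1, e1, e2, ← pow_succ, fPL,
      if_neg (show ¬ (k:ℕ) = (i:ℕ)+1 by omega), if_pos hk, zero_add]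
    by_cases hi : (i:ℕ) = s-1
    · have eP2 : fP s C i ⟨s-1, hbd⟩ = 1 := by
        rw [fP, if_pos (show (s-1:ℕ) ≤ (i:ℕ) by omega),
          show (i:ℕ) - ((⟨s-1, hbd⟩ : Fin s):ℕ) = 0 by simp only [Fin.val_mk]; omega,
          pow_zero]
      rw [eP2, one_mul, if_pos ⟨hi, hk⟩]
    · have eP2 : fP s C i ⟨s-1, hbd⟩ = 0 := by
        rw [fP, if_neg (show ¬ (s-1:ℕ) ≤ (i:ℕ) by omega)]
      rw [eP2, zero_mul, add_zero, if_neg (fun h : _ ∧ _ => hi h.1), add_zero]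
  · have hbd : (k:ℕ) - 1 < s := by omega
    have hkm : k ≠ (⟨(k:ℕ)-1, hbd⟩ : Fin s) := by
      intro h; rw [Fin.ext_iff] at h; simp only [Fin.val_mk] at h; omega
    rw [fin_sum_eq_pair _ k ⟨(k:ℕ)-1, hbd⟩ hkm (fun j hj1 hj2 => by
      have h2 : (j:ℕ) ≠ (k:ℕ)-1 := by simpa using Fin.val_ne_of_ne hj2
      rw [fL, if_neg (fun h => hj1 h), if_neg (by omega),
        if_neg (fun h => hk h.2.1), add_zero, add_zero, mul_zero])]
    have e1 : fL s 1 C k k = -C := by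
      rw [fL, if_pos rfl, if_neg hk, if_neg (by omega),
        if_neg (fun h : _ ∧ _ ∧ k ≠ k => h.2.2 rfl), add_zero, add_zero]
    have e2 : fL s 1 C ⟨(k:ℕ)-1, hbd⟩ k = 1 := by
      rw [fL, if_neg (fun h => hkm h.symm), if_pos (show (k:ℕ) = ((k:ℕ)-1)+1 by omega),
        if_neg (fun h : _ ∧ _ ∧ _ => hk h.2.1), zero_add, add_zero]
    rw [e1, e2, mul_one, fPL, if_neg hk, add_zero, if_neg (fun h : _ ∧ _ => hk h.2),
      add_zero]
    rcases lt_trichotomy ((k:ℕ)) ((i:ℕ)+1) with h | h | h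
    · have eP1 : fP s C i k = C^((i:ℕ)-(k:ℕ)) := by
        rw [fP, if_pos (show (k:ℕ) ≤ (i:ℕ) by omega)]
      have eP2 : fP s C i ⟨(k:ℕ)-1, hbd⟩ = C^((i:ℕ)-(k:ℕ)+1) := by
        rw [fP, if_pos (show ((k:ℕ)-1) ≤ (i:ℕ) by omega)]
        congr 1; simp only [Fin.val_mk]; omega
      rw [eP1, eP2, mul_neg, ← pow_succ, neg_add_cancel,
        if_neg (show ¬ (k:ℕ) = (i:ℕ)+1 by omega)]
    · have eP1 : fP s C i k = 0 := by
        rw [fP, if_neg (show ¬ (k:ℕ) ≤ (i:ℕ) by omega)]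
      have eP2 : fP s C i ⟨(k:ℕ)-1, hbd⟩ = 1 := by
        rw [fP, if_pos (show ((k:ℕ)-1) ≤ (i:ℕ) by omega),
          show (i:ℕ) - ((⟨(k:ℕ)-1, hbd⟩ : Fin s):ℕ) = 0 by simp only [Fin.val_mk]; omega,
          pow_zero]
      rw [eP1, eP2, zero_mul, zero_add, if_pos h]
    · have eP1 : fP s C i k = 0 := by
        rw [fP, if_neg (show ¬ (k:ℕ) ≤ (i:ℕ) by omega)]
      have eP2 : fP s C i ⟨(k:ℕ)-1, hbd⟩ = 0 := by
        rw [fP, if_neg (show ¬ ((k:ℕ)-1) ≤ (i:ℕ) by omega)]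
      rw [eP1, eP2, zero_mul, add_zero,
        if_neg (show ¬ (k:ℕ) = (i:ℕ)+1 by omega)]

lemma id5 (s : ℕ) (hs : 2 ≤ s) (C : Matrix (Fin d) (Fin d) K) (i k : Fin s) :
    ∑ j, fPL s C i j * fQ s C j k = fM s C i k := by
  have hilt := i.isLt
  have hklt := k.isLt
  by_cases hk : (k:ℕ) = 0
  · by_cases hi : (i:ℕ) = s-1
    · rw [fin_sum_eq_single _ k (fun j hj => by
        have h2 : (j:ℕ) ≠ (k:ℕ) := by simpa using Fin.val_ne_of_ne hj
        rw [fPL, if_neg (by omega), if_neg (by omega), if_neg (fun h : _ ∧ _ => by omega),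
          add_zero, add_zero, zero_mul])]
      have e2 : fQ s C k k = 1 := by
        rw [fQ, if_pos rfl, if_neg (by omega), add_zero]
      rw [e2, mul_one, fPL, fM, if_neg (show ¬ (k:ℕ) = (i:ℕ)+1 by omega), zero_add,
        zero_add, if_pos hk, if_pos ⟨hi, hk⟩, if_pos ⟨hi, hk⟩,
        show (i:ℕ)+1 = s by omega, sub_eq_add_neg]
    · have hbd : (i:ℕ)+1 < s := by omega
      have hkt : k ≠ (⟨(i:ℕ)+1, hbd⟩ : Fin s) := by
        intro h; rw [Fin.ext_iff] at h; simp only [Fin.val_mk] at h; omega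
      rw [fin_sum_eq_pair _ k ⟨(i:ℕ)+1, hbd⟩ hkt (fun j hj1 hj2 => by
        have h1 : (j:ℕ) ≠ (k:ℕ) := by simpa using Fin.val_ne_of_ne hj1
        have h2 : (j:ℕ) ≠ (i:ℕ)+1 := by simpa using Fin.val_ne_of_ne hj2
        rw [fPL, if_neg (by omega), if_neg (by omega), if_neg (fun h : _ ∧ _ => by omega),
          add_zero, add_zero, zero_mul])]
      have e1 : fPL s C i k = C^((i:ℕ)+1) := by
        rw [fPL, if_neg (by omega), if_pos hk, if_neg (fun h : _ ∧ _ => hi h.1),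
          zero_add, add_zero]
      have e2 : fPL s C i ⟨(i:ℕ)+1, hbd⟩ = 1 := by
        rw [fPL, if_pos (by simp only [Fin.val_mk]), if_neg (by simp only [Fin.val_mk]; omega),
          if_neg (fun h : _ ∧ _ => hi h.1), add_zero, add_zero]
      have e3 : fQ s C ⟨(i:ℕ)+1, hbd⟩ k = -(C^((i:ℕ)+1)) := by
        rw [fQ, if_neg (fun h => hkt h.symm),
          if_pos ⟨hk, by simp only [Fin.val_mk]; omega⟩, zero_add]
      have e4 : fQ s C k k = 1 := by
        rw [fQ, if_pos rfl, if_neg (by omega), add_zero]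
      rw [e1, e2, e3, e4, mul_one, one_mul, add_neg_cancel, fM,
        if_neg (by omega), if_neg (fun h : _ ∧ _ => hi h.1), add_zero]
  · rw [fin_sum_eq_single _ k (fun j hj => by
      rw [fQ, if_neg (fun h => hj h), if_neg (fun h : _ ∧ _ => hk h.1), add_zero, mul_zero])]
    have e4 : fQ s C k k = 1 := by
      rw [fQ, if_pos rfl, if_neg (fun h : _ ∧ _ => hk h.1), add_zero]
    rw [e4, mul_one, fPL, fM, if_neg hk, if_neg (fun h : _ ∧ _ => hk h.2),
      if_neg (fun h : _ ∧ _ => hk h.2), add_zero, add_zero]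
def fD (s : ℕ) (X : Matrix (Fin d) (Fin d) K) (i k : Fin s) : Matrix (Fin d) (Fin d) K :=
  if i = k then (if (i:ℕ) = s-1 then X else 1) else 0

def rot (s : ℕ) : Equiv.Perm (Fin s) where
  toFun i := ⟨if (i:ℕ) = s-1 then 0 else (i:ℕ)+1, by have := i.isLt; split_ifs <;> omega⟩
  invFun k := ⟨if (k:ℕ) = 0 then s-1 else (k:ℕ)-1, by have := k.isLt; split_ifs <;> omega⟩
  left_inv := by
    intro i; have := i.isLt; ext
    simp only [Fin.val_mk]
    split_ifs <;> simp_all <;> omega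
  right_inv := by
    intro k; have := k.isLt; ext
    simp only [Fin.val_mk]
    split_ifs <;> simp_all <;> omega

lemma rot_symm_val (s : ℕ) (q : Fin s) :
    (((rot s).symm q : Fin s) : ℕ) = if (q:ℕ) = 0 then s-1 else (q:ℕ)-1 := by
  simp only [rot, Equiv.coe_fn_symm_mk]

lemma rot_val (s : ℕ) (q : Fin s) :
    ((rot s q : Fin s) : ℕ) = if (q:ℕ) = s-1 then 0 else (q:ℕ)+1 := by
  simp only [rot, Equiv.coe_fn_mk]

-- from t4 (rank of 2x2 block diagonal)
def prodSubEquiv {M N : Type*} [AddCommGroup M] [Module K M] [AddCommGroup N] [Module K N]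
    (p : Submodule K M) (q : Submodule K N) : (p.prod q) ≃ₗ[K] p × q where
  toFun x := (⟨x.1.1, x.2.1⟩, ⟨x.1.2, x.2.2⟩)
  invFun y := ⟨(y.1.1, y.2.1), ⟨y.1.2, y.2.2⟩⟩
  left_inv _ := rfl
  right_inv _ := rfl
  map_add' _ _ := rfl
  map_smul' _ _ := rfl

lemma finrank_submodule_prod {M N : Type*} [AddCommGroup M] [Module K M] [AddCommGroup N]
    [Module K N] [FiniteDimensional K M] [FiniteDimensional K N]
    (p : Submodule K M) (q : Submodule K N) :
    Module.finrank K (p.prod q) = Module.finrank K p + Module.finrank K q := by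
  rw [(prodSubEquiv p q).finrank_eq, Module.finrank_prod]

lemma range_prodMap' {M N M' N' : Type*} [AddCommGroup M] [Module K M] [AddCommGroup N]
    [Module K N] [AddCommGroup M'] [Module K M'] [AddCommGroup N'] [Module K N']
    (f : M →ₗ[K] M') (g : N →ₗ[K] N') :
    LinearMap.range (f.prodMap g) = (LinearMap.range f).prod (LinearMap.range g) := by
  ext ⟨x, y⟩
  simp only [LinearMap.mem_range, Submodule.mem_prod, LinearMap.prodMap_apply, Prod.mk.injEq,
    Prod.exists]
  constructor
  · rintro ⟨a, b, ha, hb⟩; exact ⟨⟨a, ha⟩, ⟨b, hb⟩⟩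
  · rintro ⟨⟨a, ha⟩, ⟨b, hb⟩⟩; exact ⟨a, b, ha, hb⟩

lemma rank_fromBlocks_diag {m n : Type*} [Fintype m] [Fintype n] [DecidableEq m] [DecidableEq n]
    (A : Matrix m m K) (D : Matrix n n K) :
    (Matrix.fromBlocks A 0 0 D).rank = A.rank + D.rank := by
  classical
  set e := LinearEquiv.sumArrowLequivProdArrow m n K K with he
  have hmv : (Matrix.fromBlocks A 0 0 D).mulVecLin =
      e.symm.toLinearMap ∘ₗ ((A.mulVecLin.prodMap D.mulVecLin) ∘ₗ e.toLinearMap) := by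
    apply LinearMap.ext; intro v
    funext x
    simp only [Matrix.mulVecLin_apply, LinearMap.coe_comp, Function.comp_apply,
      LinearEquiv.coe_coe, LinearMap.prodMap_apply, Matrix.fromBlocks_mulVec,
      Matrix.zero_mulVec, add_zero, zero_add]
    cases x with
    | inl a =>
      simp [he, LinearEquiv.sumArrowLequivProdArrow, Equiv.sumArrowEquivProdArrow]
    | inr b =>
      simp [he, LinearEquiv.sumArrowLequivProdArrow, Equiv.sumArrowEquivProdArrow]
  rw [Matrix.rank, hmv, LinearMap.range_comp, LinearMap.range_comp, LinearEquiv.range,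
    Submodule.map_top, LinearEquiv.finrank_map_eq, range_prodMap', finrank_submodule_prod,
    Matrix.rank, Matrix.rank]

def splitEquiv (s d : ℕ) (hs : 1 ≤ s) : ((Fin (s-1) × Fin d) ⊕ Fin d) ≃ (Fin s × Fin d) :=
  { toFun := fun x => Sum.elim
      (fun ia => ((⟨(ia.1:ℕ), lt_of_lt_of_le ia.1.isLt (Nat.sub_le s 1)⟩ : Fin s), ia.2))
      (fun a => ((⟨s-1, by omega⟩ : Fin s), a)) x
    invFun := fun p => if h : (p.1 : ℕ) < s - 1 then Sum.inl (⟨p.1, h⟩, p.2) else Sum.inr p.2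
    left_inv := by
      rintro (⟨i, a⟩ | a)
      · dsimp only [Sum.elim_inl]
        rw [dif_pos (show ((⟨(i:ℕ), lt_of_lt_of_le i.isLt (Nat.sub_le s 1)⟩ : Fin s) : ℕ) < s - 1
          from i.isLt)]
      · dsimp only [Sum.elim_inr]
        rw [dif_neg (show ¬ ((⟨s-1, by omega⟩ : Fin s) : ℕ) < s - 1 from Nat.lt_irrefl _)]
    right_inv := by
      intro p
      dsimp only
      by_cases h : (p.1 : ℕ) < s - 1
      · rw [dif_pos h]; rfl
      · rw [dif_neg h]
        dsimp only [Sum.elim_inr]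
        have hp := p.1.isLt
        exact Prod.ext (Fin.ext (by simp only [Fin.val_mk]; omega)) rfl }

lemma rank_blk_fD (s : ℕ) (hs : 1 ≤ s) (X : Matrix (Fin d) (Fin d) K) :
    (blk s d (fD s X)).rank = (s-1)*d + X.rank := by
  have hsub : (blk s d (fD s X)).submatrix ⇑(splitEquiv s d hs) ⇑(splitEquiv s d hs) =
      Matrix.fromBlocks (1 : Matrix (Fin (s-1) × Fin d) (Fin (s-1) × Fin d) K) 0 0 X := by
    ext x y
    rcases x with ⟨i, a⟩ | a <;> rcases y with ⟨k, b⟩ | b <;>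
      simp only [Matrix.submatrix_apply, splitEquiv, Equiv.coe_fn_mk, Sum.elim_inl,
        Sum.elim_inr, blk, fD, Matrix.of_apply, Matrix.fromBlocks_apply₁₁,
        Matrix.fromBlocks_apply₁₂, Matrix.fromBlocks_apply₂₁, Matrix.fromBlocks_apply₂₂]
    · -- inl inl
      have hi := i.isLt
      rw [if_neg (show ¬ ((⟨(i:ℕ), _⟩ : Fin s) : ℕ) = s - 1 by simp only [Fin.val_mk]; omega)]
      by_cases hik : i = k
      · subst hik
        rw [if_pos rfl]
        simp [Matrix.one_apply, Prod.ext_iff]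
      · rw [if_neg (by simp only [ne_eq, Fin.ext_iff, Fin.val_mk]
                       rw [Fin.ext_iff] at hik; exact fun h => hik h)]
        rw [Matrix.one_apply, if_neg (by simp [Prod.ext_iff, hik])]
        simp
    · -- inl inr
      have hi := i.isLt
      rw [if_neg (show ¬ ((⟨(i:ℕ), _⟩ : Fin s)) = (⟨s-1, _⟩ : Fin s) by
        simp only [ne_eq, Fin.ext_iff, Fin.val_mk]; omega)]
      simp
    · -- inr inl
      have hk := k.isLt
      rw [if_neg (show ¬ ((⟨s-1, _⟩ : Fin s)) = (⟨(k:ℕ), _⟩ : Fin s) by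
        simp only [ne_eq, Fin.ext_iff, Fin.val_mk]; omega)]
      simp
    · -- inr inr
      simp
  rw [← Matrix.rank_submatrix (blk s d (fD s X)) (splitEquiv s d hs) (splitEquiv s d hs),
    hsub, rank_fromBlocks_diag, Matrix.rank_one, Fintype.card_prod, Fintype.card_fin,
    Fintype.card_fin]

variable {d : ℕ}

lemma Lsub_eq_blk (s : ℕ) (B₀ B₁ : Matrix (Fin d) (Fin d) K) :
    Lsub s d B₀ B₁ = blk s d (fL s B₀ B₁) := by
  ext p q
  simp only [Lsub, blk, fL, Matrix.of_apply, Matrix.add_apply,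
    apply_ite (fun M : Matrix (Fin d) (Fin d) K => M p.2 q.2), Matrix.zero_apply,
    Matrix.neg_apply]

lemma fM_eq_fD (s : ℕ) (hs : 2 ≤ s) (C : Matrix (Fin d) (Fin d) K) (i k : Fin s) :
    fM s C i k = fD s (C^s - C) i ((rot s).symm k) := by
  have hi := i.isLt
  have hk := k.isLt
  rw [fM, fD]
  by_cases h1 : (i:ℕ) = s-1
  · by_cases h2 : (k:ℕ) = 0
    · have hc : i = (rot s).symm k := by
        rw [Fin.ext_iff, rot_symm_val, if_pos h2]; omega
      rw [if_pos hc, if_pos h1, if_neg (show ¬ (k:ℕ) = (i:ℕ)+1 by omega),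
        if_pos ⟨h1, h2⟩, zero_add]
    · have hc : ¬ i = (rot s).symm k := by
        rw [Fin.ext_iff, rot_symm_val, if_neg h2]; omega
      rw [if_neg hc, if_neg (show ¬ (k:ℕ) = (i:ℕ)+1 by omega),
        if_neg (fun h : _ ∧ _ => h2 h.2), add_zero]
  · by_cases h2 : (k:ℕ) = (i:ℕ)+1
    · have hc : i = (rot s).symm k := by
        rw [Fin.ext_iff, rot_symm_val, if_neg (by omega)]; omega
      rw [if_pos hc, if_neg h1, if_pos h2, if_neg (fun h : _ ∧ _ => h1 h.1), add_zero]
    · have hc : ¬ i = (rot s).symm k := by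
        rw [Fin.ext_iff, rot_symm_val]; split_ifs <;> omega
      rw [if_neg hc, if_neg h2, if_neg (fun h : _ ∧ _ => h1 h.1), add_zero]

lemma blk_fM_eq (s : ℕ) (hs : 2 ≤ s) (C : Matrix (Fin d) (Fin d) K) :
    blk s d (fM s C) = (blk s d (fD s (C^s - C))).submatrix
      (⇑(Equiv.refl (Fin s × Fin d))) (⇑((rot s).symm.prodCongr (Equiv.refl (Fin d)))) := by
  ext p q
  simp only [Matrix.submatrix_apply, blk, Matrix.of_apply, Equiv.coe_refl, id_eq,
    Equiv.prodCongr_apply, Prod.map_fst, Prod.map_snd, Equiv.refl_apply, Prod.map]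
  rw [fM_eq_fD s hs C p.1 q.1]

end Stmt12Aux

open Stmt12Aux in
theorem stmt_12 (K : Type*) [Field K] (s : ℕ) (hs : 2 ≤ s) (d : ℕ) (hd : 1 ≤ d)
    (A B : Matrix (Fin d) (Fin d) K) (hA : IsUnit A) (C : Matrix (Fin d) (Fin d) K)
    (hC : C = A⁻¹ * B) :
    (Lsub s d A B).rank = (s - 1) * d + (C ^ s - C).rank := by
  classical
  have hAdet : IsUnit A.det := (Matrix.isUnit_iff_isUnit_det A).mp hA
  have hACB : A * C = B := by
    rw [hC, ← Matrix.mul_assoc, Matrix.mul_nonsing_inv A hAdet, Matrix.one_mul]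
  have hfac : blk s d (fA s A) * blk s d (fL s 1 C) = Lsub s d A B := by
    rw [blk_mul, Lsub_eq_blk]
    exact congrArg (blk s d) (funext fun i => funext fun k => id1 s A B C hACB i k)
  have hAinvA : (A⁻¹ : Matrix (Fin d) (Fin d) K) * A = 1 := Matrix.nonsing_inv_mul A hAdet
  have hAblk : blk s d (fA s A⁻¹) * blk s d (fA s A) = 1 := by
    rw [blk_mul, ← blk_one s d]
    exact congrArg (blk s d) (funext fun i => funext fun k => idA s A A⁻¹ hAinvA i k)
  have hAdet' : IsUnit (blk s d (fA s A)).det := Matrix.isUnit_det_of_left_inverse hAblk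
  have hPinvP : blk s d (fPinv s C) * blk s d (fP s C) = 1 := by
    rw [blk_mul, ← blk_one s d]
    exact congrArg (blk s d) (funext fun i => funext fun k => id2 s C i k)
  have hPdet : IsUnit (blk s d (fP s C)).det := Matrix.isUnit_det_of_left_inverse hPinvP
  have hQQinv : blk s d (fQ s C) * blk s d (fQinv s C) = 1 := by
    rw [blk_mul, ← blk_one s d]
    exact congrArg (blk s d) (funext fun i => funext fun k => id3 s C i k)
  have hQdet : IsUnit (blk s d (fQ s C)).det := Matrix.isUnit_det_of_right_inverse hQQinv
  have hPLQ : blk s d (fP s C) * blk s d (fL s 1 C) * blk s d (fQ s C) = blk s d (fM s C) := by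
    have h4 : blk s d (fP s C) * blk s d (fL s 1 C) = blk s d (fPL s C) := by
      rw [blk_mul]
      exact congrArg (blk s d) (funext fun i => funext fun k => id4 s hs C i k)
    rw [h4, blk_mul]
    exact congrArg (blk s d) (funext fun i => funext fun k => id5 s hs C i k)
  have r1 : (Lsub s d A B).rank = (blk s d (fL s 1 C)).rank := by
    rw [← hfac, Matrix.rank_mul_eq_right_of_isUnit_det _ _ hAdet']
  have r2 : (blk s d (fM s C)).rank = (blk s d (fL s 1 C)).rank := by
    rw [← hPLQ, Matrix.rank_mul_eq_left_of_isUnit_det _ _ hQdet,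
      Matrix.rank_mul_eq_right_of_isUnit_det _ _ hPdet]
  have r3 : (blk s d (fM s C)).rank = (blk s d (fD s (C^s - C))).rank := by
    rw [blk_fM_eq s hs C, Matrix.rank_submatrix]
  rw [r1, ← r2, r3, rank_blk_fD s (by omega) (C^s - C)]
end
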